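/- In MvPolynomial (Fin 2) ℝ with the Pell difference structure, a polynomial g satisfies (α² + α + 2β) * σ(g) + (β² + 2β) * g = α³ + β³ + α²β − αβ² + α² + 4β² + αβ if and only if g = β − α; that is, β − α is the unique polynomial solution of this first-order difference equation. -/

import Mathlib

open MvPolynomial

noncomputable abbrev PellS := MvPolynomial (Fin 2) ℝ
noncomputable abbrev PellR1 := MvPolynomial (Fin 1) ℝ

noncomputable def pellE : PellS ≃ₐ[ℝ] PellS :=
  AlgEquiv.ofAlgHom (aeval ![X 1, X 0 + 2 * X 1]) (aeval ![X 1 - 2 * X 0, X 0])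
    (by refine MvPolynomial.algHom_ext fun i => ?_; fin_cases i <;> simp [map_ofNat])
    (by refine MvPolynomial.algHom_ext fun i => ?_; fin_cases i <;> simp [map_ofNat])

lemma pellE_X0 : pellE (X 0) = X 1 := by simp [pellE]
lemma pellE_X1 : pellE (X 1) = X 0 + 2 * X 1 := by simp [pellE, map_ofNat]
lemma pellEsymm_X1 : pellE.symm (X 1) = X 0 := by
  have := congrArg pellE.symm pellE_X0; simpa using this.symm
lemma pellEsymm_X0 : pellE.symm (X 0) = X 1 - 2 * X 0 := by
  have := congrArg pellE.symm pellE_X1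
  rw [AlgEquiv.symm_apply_apply, map_add, map_mul, pellEsymm_X1, map_ofNat] at this
  linear_combination -this
lemma pellEsymm_C (r : ℝ) : pellE.symm (C r) = C r := by
  have := pellE.symm.commutes r; simpa [algebraMap_eq] using this

noncomputable def pellPhi : PellS ≃ₐ[ℝ] Polynomial PellR1 :=
  (renameEquiv ℝ (Equiv.swap (0 : Fin 2) 1)).trans (MvPolynomial.finSuccEquiv ℝ 1)

lemma pellPhi_X0 : pellPhi (X 0) = Polynomial.C (X 0) := by
  simp only [pellPhi, AlgEquiv.trans_apply, renameEquiv_apply, rename_X]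
  rw [show Equiv.swap (0 : Fin 2) 1 0 = Fin.succ 0 from rfl, finSuccEquiv_X_succ]
lemma pellPhi_X1 : pellPhi (X 1) = Polynomial.X := by
  simp only [pellPhi, AlgEquiv.trans_apply, renameEquiv_apply, rename_X]
  rw [show Equiv.swap (0 : Fin 2) 1 1 = 0 from rfl, finSuccEquiv_X_zero]

noncomputable def pellJ : PellR1 →ₐ[ℝ] PellS := aeval ![X 0]
noncomputable def pellPsi (c : PellR1) : PellS →ₐ[ℝ] PellR1 := aeval ![X 0, c]

lemma pellPsi_C (c : PellR1) (r : ℝ) : pellPsi c (C r) = C r := by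
  simp [pellPsi, algebraMap_eq]
lemma pellPsi_X0 (c : PellR1) : pellPsi c (X 0) = X 0 := by simp [pellPsi]
lemma pellPsi_X1 (c : PellR1) : pellPsi c (X 1) = c := by simp [pellPsi]

lemma pellPhi_J (c : PellR1) : pellPhi (pellJ c) = Polynomial.C c := by
  induction c using MvPolynomial.induction_on with
  | C a =>
      rw [show (pellJ (C a)) = algebraMap ℝ PellS a from by simp [pellJ, algebraMap_eq],
        AlgEquiv.commutes]
      simp [Polynomial.algebraMap_apply, algebraMap_eq]
  | add p q hp hq => simp [map_add, hp, hq]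
  | mul_X p i hp =>
      have : i = 0 := Subsingleton.elim _ _
      subst this
      rw [map_mul, map_mul, hp]
      simp [pellJ, pellPhi_X0]

lemma pellPsi_eval (c : PellR1) (f : PellS) :
    Polynomial.eval c (pellPhi f) = pellPsi c f := by
  induction f using MvPolynomial.induction_on with
  | C a =>
      rw [show (C a : PellS) = algebraMap ℝ PellS a from rfl, AlgEquiv.commutes]
      simp [Polynomial.algebraMap_apply, algebraMap_eq, pellPsi]
  | add p q hp hq => simp [map_add, hp, hq]
  | mul_X p i hp =>
      rw [map_mul, Polynomial.eval_mul, hp, map_mul]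
      congr 1
      fin_cases i
      · simp [pellPhi_X0, pellPsi]
      · simp [pellPhi_X1, pellPsi]

lemma pell_key_dvd (c : PellR1) (f : PellS) (hf : pellPsi c f = 0) :
    (X 1 - pellJ c) ∣ f := by
  have hroot : (pellPhi f).IsRoot c := by
    rw [Polynomial.IsRoot, pellPsi_eval, hf]
  have hdvd : Polynomial.X - Polynomial.C c ∣ pellPhi f :=
    Polynomial.dvd_iff_isRoot.mpr hroot
  have h1 : pellPhi (X 1 - pellJ c) = Polynomial.X - Polynomial.C c := by
    rw [map_sub, pellPhi_X1, pellPhi_J]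
  have := map_dvd pellPhi.symm (h1 ▸ hdvd)
  simpa using this

lemma pellPsi_J (c : PellR1) (p : PellR1) : pellPsi c (pellJ p) = p := by
  induction p using MvPolynomial.induction_on with
  | C a => simp [pellJ, pellPsi, algebraMap_eq]
  | add p q hp hq => simp [map_add, hp, hq]
  | mul_X p i hp =>
      have : i = 0 := Subsingleton.elim _ _
      subst this
      rw [map_mul, map_mul, hp]
      simp [pellJ, pellPsi]

lemma pellPsi_d (c : PellR1) : pellPsi c (X 1 - pellJ c) = 0 := by
  rw [map_sub, pellPsi_J, pellPsi_X1, sub_self]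

lemma pell_d_prime (c : PellR1) : Prime (X 1 - pellJ c : PellS) := by
  constructor
  · intro h
    have := congrArg pellPhi h
    rw [map_sub, pellPhi_X1, pellPhi_J, map_zero] at this
    exact Polynomial.X_sub_C_ne_zero c this
  constructor
  · intro h
    obtain ⟨t, ht⟩ := h.exists_right_inv
    have := congrArg (pellPsi c) ht
    rw [map_mul, pellPsi_d, zero_mul, map_one] at this
    exact zero_ne_one this
  · intro a b hab
    obtain ⟨t, ht⟩ := hab
    have : pellPsi c a * pellPsi c b = 0 := by
      rw [← map_mul, ht, map_mul, pellPsi_d, zero_mul]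
    rcases mul_eq_zero.mp this with h | h
    · exact Or.inl (pell_key_dvd c a h)
    · exact Or.inr (pell_key_dvd c b h)

lemma pell_dvd_psi (c : PellR1) {f : PellS} (h : (X 1 - pellJ c) ∣ f) :
    pellPsi c f = 0 := by
  obtain ⟨t, ht⟩ := h
  rw [ht, map_mul, pellPsi_d, zero_mul]

noncomputable def pellCA : PellR1 := C (-(1:ℝ)/2) * (X 0 ^ 2 + X 0)

lemma pell_prime_iter (n : ℕ) : Prime ((⇑pellE)^[n] (X 1 - pellJ pellCA)) := by
  induction n with
  | zero => simpa using pell_d_prime pellCA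
  | succ n ih =>
      rw [Function.iterate_succ_apply']
      exact (MulEquiv.prime_iff pellE).mpr ih

lemma pell_iter_dvd_transfer :
    ∀ (n : ℕ) (x y : PellS), (⇑pellE)^[n] x ∣ y → x ∣ (⇑pellE.symm)^[n] y := by
  intro n
  induction n with
  | zero => intro x y h; simpa using h
  | succ n ih =>
      intro x y h
      rw [Function.iterate_succ_apply] at h
      have h2 := map_dvd pellE.symm (ih (pellE x) y h)
      rw [AlgEquiv.symm_apply_apply] at h2
      rwa [Function.iterate_succ_apply']

lemma pell_iter_symm_add_two :
    ∀ (n : ℕ) (x : PellS), (⇑pellE.symm)^[n] (x + 2) = (⇑pellE.symm)^[n] x + 2 := by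
  intro n
  induction n with
  | zero => intro x; simp
  | succ n ih =>
      intro x
      rw [Function.iterate_succ_apply', Function.iterate_succ_apply', ih, map_add, map_ofNat]

lemma pell_linform (n : ℕ) : ∃ P Q : ℝ, ¬(P = 0 ∧ Q = 0) ∧
    (⇑pellE.symm)^[n] (X 1) = C P * X 0 + C Q * X 1 := by
  induction n with
  | zero =>
      refine ⟨0, 1, by norm_num, by simp⟩
  | succ n ih =>
      obtain ⟨P, Q, hPQ, hform⟩ := ih
      refine ⟨Q - 2 * P, P, ?_, ?_⟩
      · rintro ⟨h1, h2⟩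
        exact hPQ ⟨h2, by linarith⟩
      · rw [Function.iterate_succ_apply', hform, map_add, map_mul, map_mul,
          pellEsymm_C, pellEsymm_C, pellEsymm_X0, pellEsymm_X1,
          show C (Q - 2 * P) = (C Q - 2 * C P : PellS) from by
            rw [map_sub, map_mul, map_ofNat]]
        ring

lemma pell_no_dvd_X1 (n : ℕ) : ¬ ((⇑pellE)^[n] (X 1 - pellJ pellCA) ∣ X 1) := by
  intro h
  obtain ⟨P, Q, hPQ, hform⟩ := pell_linform n
  have hd := pell_iter_dvd_transfer n _ _ h
  rw [hform] at hd
  have h0 := pell_dvd_psi pellCA hd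
  rw [map_add, map_mul, map_mul, pellPsi_C, pellPsi_C, pellPsi_X0, pellPsi_X1] at h0
  have e1 := congrArg (eval fun _ => (-1:ℝ)) h0
  have e2 := congrArg (eval fun _ => (1:ℝ)) h0
  simp [pellCA] at e1 e2
  norm_num at e1 e2
  exact hPQ ⟨e1, by linarith⟩

lemma pell_no_dvd_X1_add_two (n : ℕ) :
    ¬ ((⇑pellE)^[n] (X 1 - pellJ pellCA) ∣ X 1 + 2) := by
  intro h
  obtain ⟨P, Q, hPQ, hform⟩ := pell_linform n
  have hd := pell_iter_dvd_transfer n _ _ h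
  rw [pell_iter_symm_add_two, hform] at hd
  have h0 := pell_dvd_psi pellCA hd
  rw [map_add, map_add, map_mul, map_mul, pellPsi_C, pellPsi_C, pellPsi_X0,
    pellPsi_X1, map_ofNat] at h0
  have e1 := congrArg (eval fun _ => (0:ℝ)) h0
  simp [pellCA, map_ofNat] at e1

lemma pell_descent (h : PellS) :
    ∀ n : ℕ, 2 * ((⇑pellE)^[n] (X 1 - pellJ pellCA)) * pellE h
        + (X 1 ^ 2 + 2 * X 1) * h = 0 → h = 0 := by
  refine WellFounded.induction (wellFounded_dvdNotUnit)
    (C := fun h => ∀ n : ℕ, 2 * ((⇑pellE)^[n] (X 1 - pellJ pellCA)) * pellE h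
        + (X 1 ^ 2 + 2 * X 1) * h = 0 → h = 0) h ?_
  intro h IH n heq
  have hprime := pell_prime_iter n
  have hdvd : (⇑pellE)^[n] (X 1 - pellJ pellCA) ∣ (X 1 ^ 2 + 2 * X 1) * h :=
    ⟨-(2 * pellE h), by linear_combination heq⟩
  rcases hprime.2.2 _ _ hdvd with hB | hh
  · exfalso
    have : (⇑pellE)^[n] (X 1 - pellJ pellCA) ∣ X 1 * (X 1 + 2) := by
      rwa [show (X 1 : PellS) * (X 1 + 2) = X 1 ^ 2 + 2 * X 1 from by ring]
    rcases hprime.2.2 _ _ this with h1 | h2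
    · exact pell_no_dvd_X1 n h1
    · exact pell_no_dvd_X1_add_two n h2
  · obtain ⟨k, hk⟩ := hh
    by_cases hk0 : k = 0
    · rw [hk, hk0, mul_zero]
    · exfalso
      rw [hk, map_mul] at heq
      have hmul : (⇑pellE)^[n] (X 1 - pellJ pellCA) *
          (2 * ((⇑pellE)^[n+1] (X 1 - pellJ pellCA)) * pellE k
            + (X 1 ^ 2 + 2 * X 1) * k) = 0 := by
        rw [Function.iterate_succ_apply']
        linear_combination heq
      rcases mul_eq_zero.mp hmul with h0 | h0
      · exact hprime.1 h0
      · exact hk0 (IH k ⟨hk0, _, hprime.2.1, by rw [hk]; ring⟩ (n+1) h0)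

theorem pell_unique_polynomial_solution
    (σ : MvPolynomial (Fin 2) ℝ →ₐ[ℝ] MvPolynomial (Fin 2) ℝ)
    (hσα : σ (X 0) = X 1)
    (hσβ : σ (X 1) = X 0 + 2 * X 1)
    (g : MvPolynomial (Fin 2) ℝ) :
    ((X 0) ^ 2 + X 0 + 2 * X 1) * σ g + ((X 1) ^ 2 + 2 * X 1) * g =
        (X 0) ^ 3 + (X 1) ^ 3 + (X 0) ^ 2 * X 1 - X 0 * (X 1) ^ 2 +
          (X 0) ^ 2 + 4 * (X 1) ^ 2 + X 0 * X 1 ↔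
      g = X 1 - X 0 := by
  have hσ : ∀ f, σ f = pellE f := by
    have h : σ = pellE.toAlgHom := by
      refine MvPolynomial.algHom_ext fun i => ?_
      fin_cases i <;>
        simp [hσα, hσβ, pellE_X0, pellE_X1]
    intro f; rw [h]; rfl
  constructor
  · intro hEq
    have hC : (C (-(1:ℝ)/2) : PellS) * 2 = -1 := by
      rw [show (2 : PellS) = C (2:ℝ) from (map_ofNat _ 2).symm, ← map_mul]
      norm_num
    have hJ : pellJ pellCA = C (-(1:ℝ)/2) * ((X 0 : PellS) ^ 2 + X 0) := by
      simp [pellJ, pellCA, algebraMap_eq]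
    have hE : pellE (g - (X 1 - X 0)) = σ g - (X 0 + X 1) := by
      rw [← hσ, map_sub, map_sub, hσα, hσβ]; ring
    have h0 : 2 * ((⇑pellE)^[0] (X 1 - pellJ pellCA)) * pellE (g - (X 1 - X 0))
        + (X 1 ^ 2 + 2 * X 1) * (g - (X 1 - X 0)) = 0 := by
      rw [Function.iterate_zero_apply, hE, hJ]
      linear_combination hEq - (X 0 ^ 2 + X 0) * (σ g - X 0 - X 1) * hC
    have := pell_descent (g - (X 1 - X 0)) 0 h0
    exact sub_eq_zero.mp this
  · intro hg
    rw [hg, map_sub, hσα, hσβ]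
    ring
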